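/- With the Gallager setup and X̃ ~ q independent of (X,Y) ~ q·W, for any r ∈ (0,1), E[2^{r(γ̃ - γ)}] ≤ 2^{-(1-r)E₀(r/(1-r))} · 2^{-r E₀((1-r)/r)}, where γ = log₂(W(Y|X)/P(Y)) - b and γ̃ = log₂(W(Y|X̃)/P(Y)) - b (the bias terms cancel). Consequently, if b < ((1-r)/r)·E₀(r/(1-r)), then log₂ E[2^{r(γ̃-γ)}] ≤ -r b - r E₀((1-r)/r). -/

import Mathlib

open Finset

/-- Lemma 3: with `X̃ ~ q` independent of `(X,Y) ~ q·W`, for `r ∈ (0,1)` the MGF of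
the metric difference satisfies
`E[2^{r(γ̃-γ)}] ≤ 2^{-(1-r)E₀(r/(1-r))} · 2^{-r E₀((1-r)/r)}` (the bias cancels),
and if `b < ((1-r)/r)·E₀(r/(1-r))` then
`log₂ E[2^{r(γ̃-γ)}] ≤ -r b - r E₀((1-r)/r)`. -/
theorem mgf_metric_difference_le_gallager
    {𝒳 𝒴 : Type*} [Fintype 𝒳] [Fintype 𝒴]
    (W : 𝒳 → 𝒴 → ℝ) (q : 𝒳 → ℝ) (b r : ℝ)
    (hW : ∀ x y, 0 < W x y) (hWrow : ∀ x, ∑ y, W x y = 1)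
    (hq : ∀ x, 0 ≤ q x) (hq1 : ∑ x, q x = 1)
    (P : 𝒴 → ℝ) (hP : ∀ y, P y = ∑ x, q x * W x y)
    (hPpos : ∀ y, 0 < P y)
    (E₀ : ℝ → ℝ)
    (hE₀ : ∀ ρ, E₀ ρ =
      -Real.logb 2 (∑ y, (∑ x, q x * W x y ^ (1 / (1 + ρ))) ^ (1 + ρ)))
    (hr : r ∈ Set.Ioo (0 : ℝ) 1) :
    (∑ xt, ∑ x, ∑ y, q xt * q x * W x y *
        (2 : ℝ) ^ (r * ((Real.logb 2 (W xt y / P y) - b) -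
          (Real.logb 2 (W x y / P y) - b))))
      ≤ (2 : ℝ) ^ (-(1 - r) * E₀ (r / (1 - r))) * (2 : ℝ) ^ (-r * E₀ ((1 - r) / r))
    ∧ (b < ((1 - r) / r) * E₀ (r / (1 - r)) →
      Real.logb 2
        (∑ xt, ∑ x, ∑ y, q xt * q x * W x y *
          (2 : ℝ) ^ (r * ((Real.logb 2 (W xt y / P y) - b) -
            (Real.logb 2 (W x y / P y) - b))))
        ≤ -r * b - r * E₀ ((1 - r) / r)) := by
  obtain ⟨hr0, hr1⟩ := hr
  have h1r : (0:ℝ) < 1 - r := by linarith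
  have hX : Nonempty 𝒳 := by
    by_contra h
    rw [not_nonempty_iff] at h
    simp [Finset.univ_eq_empty] at hq1
  have hY : Nonempty 𝒴 := by
    by_contra h
    rw [not_nonempty_iff] at h
    have := hWrow (Classical.arbitrary 𝒳)
    simp [Finset.univ_eq_empty] at this
  obtain ⟨x₀, hx₀⟩ : ∃ x, 0 < q x := by
    by_contra h
    push_neg at h
    have : ∑ x : 𝒳, q x = 0 :=
      Finset.sum_eq_zero fun x _ => le_antisymm (h x) (hq x)
    rw [hq1] at this; norm_num at this
  -- termwise rewrite
  have hterm : ∀ (xt x : 𝒳) (y : 𝒴),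
      q xt * q x * W x y *
        (2 : ℝ) ^ (r * ((Real.logb 2 (W xt y / P y) - b) -
          (Real.logb 2 (W x y / P y) - b)))
      = (q x * W x y ^ (1 - r)) * (q xt * W xt y ^ r) := by
    intro xt x y
    have hexp : r * ((Real.logb 2 (W xt y / P y) - b) -
        (Real.logb 2 (W x y / P y) - b))
        = Real.logb 2 (W xt y) * r - Real.logb 2 (W x y) * r := by
      rw [Real.logb_div (ne_of_gt (hW xt y)) (ne_of_gt (hPpos y)),
        Real.logb_div (ne_of_gt (hW x y)) (ne_of_gt (hPpos y))]
      ring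
    rw [hexp, Real.rpow_sub two_pos, Real.rpow_mul (by norm_num),
      Real.rpow_mul (by norm_num),
      Real.rpow_logb two_pos (by norm_num) (hW xt y),
      Real.rpow_logb two_pos (by norm_num) (hW x y)]
    have h1 : W x y ^ (1 - r : ℝ) = W x y / W x y ^ (r : ℝ) := by
      rw [eq_div_iff (ne_of_gt (Real.rpow_pos_of_pos (hW x y) r)),
        ← Real.rpow_add (hW x y)]
      norm_num
    rw [h1]
    field_simp
  set A : 𝒴 → ℝ := fun y => ∑ x, q x * W x y ^ (1 - r) with hA
  set B : 𝒴 → ℝ := fun y => ∑ x, q x * W x y ^ r with hB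
  have hApos : ∀ y, 0 < A y := fun y =>
    Finset.sum_pos' (fun x _ => mul_nonneg (hq x) (Real.rpow_pos_of_pos (hW x y) _).le)
      ⟨x₀, Finset.mem_univ _, mul_pos hx₀ (Real.rpow_pos_of_pos (hW x₀ y) _)⟩
  have hBpos : ∀ y, 0 < B y := fun y =>
    Finset.sum_pos' (fun x _ => mul_nonneg (hq x) (Real.rpow_pos_of_pos (hW x y) _).le)
      ⟨x₀, Finset.mem_univ _, mul_pos hx₀ (Real.rpow_pos_of_pos (hW x₀ y) _)⟩
  -- the sum equals ∑ y, A y * B y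
  have hS : (∑ xt, ∑ x, ∑ y, q xt * q x * W x y *
        (2 : ℝ) ^ (r * ((Real.logb 2 (W xt y / P y) - b) -
          (Real.logb 2 (W x y / P y) - b))))
      = ∑ y, A y * B y := by
    simp only [hterm]
    have e1 : ∀ xt : 𝒳,
        (∑ x, ∑ y, (q x * W x y ^ (1 - r)) * (q xt * W xt y ^ r))
          = ∑ y, A y * (q xt * W xt y ^ r) := by
      intro xt
      rw [Finset.sum_comm]
      exact Finset.sum_congr rfl fun y _ => (Finset.sum_mul _ _ _).symm
    simp only [e1]
    rw [Finset.sum_comm]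
    exact Finset.sum_congr rfl fun y _ => (Finset.mul_sum _ _ _).symm
  -- Hölder
  have hpq : Real.HolderConjugate (1/(1-r)) (1/r) := by
    rw [Real.holderConjugate_iff]
    constructor
    · exact one_lt_one_div h1r (by linarith)
    · rw [one_div, inv_inv, one_div, inv_inv]; ring
  have holder : ∑ y, A y * B y ≤
      (∑ y, A y ^ (1/(1-r))) ^ (1 - r) * (∑ y, B y ^ (1/r)) ^ r := by
    have h := Real.inner_le_Lp_mul_Lq_of_nonneg Finset.univ hpq
      (fun y _ => (hApos y).le) (fun y _ => (hBpos y).le)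
    rwa [one_div_one_div, one_div_one_div] at h
  -- identify Gallager quantities
  have hρ1 : (1:ℝ) + r / (1 - r) = 1 / (1 - r) := by field_simp; ring
  have hρ1' : (1:ℝ) / (1 + r / (1 - r)) = 1 - r := by rw [hρ1]; field_simp
  have hρ2 : (1:ℝ) + (1 - r) / r = 1 / r := by field_simp; ring
  have hρ2' : (1:ℝ) / (1 + (1 - r) / r) = r := by rw [hρ2]; field_simp
  have hS1pos : 0 < ∑ y, A y ^ (1/(1-r)) :=
    Finset.sum_pos (fun y _ => Real.rpow_pos_of_pos (hApos y) _) Finset.univ_nonempty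
  have hS2pos : 0 < ∑ y, B y ^ (1/r) :=
    Finset.sum_pos (fun y _ => Real.rpow_pos_of_pos (hBpos y) _) Finset.univ_nonempty
  have hEq1 : (∑ y, (∑ x, q x * W x y ^ (1 / (1 + r / (1 - r)))) ^ (1 + r / (1 - r)))
      = ∑ y, A y ^ (1/(1-r)) := by
    simp only [hρ1', hρ1, hA, one_div_one_div]
  have hEq2 : (∑ y, (∑ x, q x * W x y ^ (1 / (1 + (1 - r) / r))) ^ (1 + (1 - r) / r))
      = ∑ y, B y ^ (1/r) := by
    simp only [hρ2', hρ2, hB, one_div_one_div]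
  have hE1 : (∑ y, A y ^ (1/(1-r))) = (2:ℝ) ^ (-E₀ (r / (1 - r))) := by
    rw [hE₀, neg_neg, hEq1, Real.rpow_logb two_pos (by norm_num) hS1pos]
  have hE2 : (∑ y, B y ^ (1/r)) = (2:ℝ) ^ (-E₀ ((1 - r) / r)) := by
    rw [hE₀, neg_neg, hEq2, Real.rpow_logb two_pos (by norm_num) hS2pos]
  have hbound : (∑ y, A y * B y) ≤
      (2 : ℝ) ^ (-(1 - r) * E₀ (r / (1 - r))) * (2 : ℝ) ^ (-r * E₀ ((1 - r) / r)) := by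
    refine holder.trans (le_of_eq ?_)
    rw [hE1, hE2, ← Real.rpow_mul (by norm_num : (0:ℝ) ≤ 2),
      ← Real.rpow_mul (by norm_num : (0:ℝ) ≤ 2)]
    congr 1 <;> congr 1 <;> ring
  have hSpos : 0 < ∑ y, A y * B y :=
    Finset.sum_pos (fun y _ => mul_pos (hApos y) (hBpos y)) Finset.univ_nonempty
  rw [hS]
  refine ⟨hbound, fun hb => ?_⟩
  have hRHSpos : 0 < (2 : ℝ) ^ (-(1 - r) * E₀ (r / (1 - r))) * (2 : ℝ) ^ (-r * E₀ ((1 - r) / r)) :=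
    mul_pos (Real.rpow_pos_of_pos two_pos _) (Real.rpow_pos_of_pos two_pos _)
  have hlog : Real.logb 2 (∑ y, A y * B y) ≤
      -(1 - r) * E₀ (r / (1 - r)) + -r * E₀ ((1 - r) / r) := by
    have := (Real.logb_le_logb one_lt_two hSpos hRHSpos).mpr hbound
    rwa [← Real.rpow_add two_pos, Real.logb_rpow two_pos (by norm_num)] at this
  have hrb : r * b < (1 - r) * E₀ (r / (1 - r)) := by
    have h2 := (mul_lt_mul_iff_right₀ hr0).2 hb
    have : r * ((1 - r) / r * E₀ (r / (1 - r))) = (1 - r) * E₀ (r / (1 - r)) := by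
      field_simp
    linarith [h2, this.symm ▸ h2]
  linarith
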